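/- Let M be a loopless matroid on E, m ≥ 1, and Q = Q_m(M) with tip a. For any S ⊆ E(Q) with a ∈ cl_Q(S), the closure cl_Q(S) equals q(F) for some flat F of M, namely F = cl_M(p(S)). -/

import Mathlib

open Set Matroid

namespace ConePaper

variable {α : Type*}

/-- The rank of a set in a matroid: the supremum of sizes of independent subsets. -/
noncomputable def rk (M : Matroid α) (X : Set α) : ℕ :=
  sSup {n : ℕ | ∃ I, M.Indep I ∧ I ⊆ X ∧ I.ncard = n}

/-- A loopless matroid: every singleton of the ground set is independent. -/
def Loopless (M : Matroid α) : Prop := ∀ e ∈ M.E, M.Indep {e}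

/-- A coloop: an element of the ground set lying in every base. -/
def IsColoop (M : Matroid α) (e : α) : Prop := e ∈ M.E ∧ ∀ B, M.IsBase B → e ∈ B

/-- A circuit: a minimal dependent set. -/
def IsCircuit (M : Matroid α) (C : Set α) : Prop :=
  C ⊆ M.E ∧ ¬ M.Indep C ∧ ∀ x ∈ C, M.Indep (C \ {x})

/-- A cyclic flat: a flat whose restriction has no coloops. -/
def CyclicFlat (M : Matroid α) (F : Set α) : Prop :=
  M.IsFlat F ∧ ∀ e ∈ F, ¬ IsColoop (M ↾ F) e

/-- Deletion of a set from a matroid. -/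
def mdel (M : Matroid α) (X : Set α) : Matroid α := M ↾ (M.E \ X)

/-- The cone `q(S) = S ∪ {a} ∪ ⋃_{e ∈ S} T e`. -/
def cone (T : α → Set α) (a : α) (S : Set α) : Set α := S ∪ {a} ∪ ⋃ e ∈ S, T e

/-- The projection `p(S) = (S ∩ E) ∪ {e ∈ E : S ∩ T e ≠ ∅}`. -/
def proj (E : Set α) (T : α → Set α) (S : Set α) : Set α :=
  (S ∩ E) ∪ {e ∈ E | (S ∩ T e).Nonempty}

/-- `FreeCone M Q T a m` says that `Q` is the free `m`-cone of the loopless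
matroid `M`, with extra points `T e` (of size `m`) for `e ∈ M.E` and tip `a`:
its cyclic flats are those of `M` (with the same rank) together with the cones
of nonempty flats of `M` (with rank one greater). -/
structure FreeCone (M Q : Matroid α) (T : α → Set α) (a : α) (m : ℕ) : Prop where
  hm : 1 ≤ m
  hMfin : M.E.Finite
  hloopless : Loopless M
  hTfin : ∀ e ∈ M.E, (T e).Finite
  hTcard : ∀ e ∈ M.E, (T e).ncard = m
  hTdisjE : ∀ e ∈ M.E, Disjoint (T e) M.E
  hTdisj : ∀ e ∈ M.E, ∀ f ∈ M.E, e ≠ f → Disjoint (T e) (T f)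
  ha : a ∉ M.E ∪ ⋃ e ∈ M.E, T e
  hQE : Q.E = M.E ∪ (⋃ e ∈ M.E, T e) ∪ {a}
  hcyclic : ∀ F, CyclicFlat Q F ↔
      (CyclicFlat M F ∨ ∃ F', M.IsFlat F' ∧ F'.Nonempty ∧ F = cone T a F')
  hrank1 : ∀ F, CyclicFlat M F → rk Q F = rk M F
  hrank2 : ∀ F', M.IsFlat F' → F'.Nonempty → rk Q (cone T a F') = rk M F' + 1

/-- A flag of a rank-`k` matroid: a chain of flats, one of each rank `0,…,k`. -/
def IsFlag (N : Matroid α) (k : ℕ) (X : ℕ → Set α) : Prop :=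
  (∀ i ≤ k, N.IsFlat (X i) ∧ rk N (X i) = i) ∧ ∀ i < k, X i ⊂ X (i + 1)

/-! ### Auxiliary lemmas -/

lemma flat_closure (M : Matroid α) (X : Set α) : M.IsFlat (M.closure X) := by
  rw [closure_def]
  have hne : {F | M.IsFlat F ∧ X ∩ M.E ⊆ F}.Nonempty := ⟨M.E, M.ground_isFlat, inter_subset_right⟩
  have := hne.coe_sort
  convert IsFlat.iInter (M := M) (Fs := fun F : {F | M.IsFlat F ∧ X ∩ M.E ⊆ F} => F.1)
    (fun F => F.2.1)
  simp [sInter_eq_iInter]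

lemma ncard_le_of_basis {N : Matroid α} {I J X : Set α} (hX : X.Finite)
    (hI : N.IsBasis I X) (hJ : N.Indep J) (hJX : J ⊆ X) : J.ncard ≤ I.ncard := by
  obtain ⟨J', hJ', hJJ'⟩ := hJ.subset_isBasis_of_subset hJX hI.subset_ground
  have h1 : J.ncard ≤ J'.ncard := ncard_le_ncard hJJ' (hX.subset hJ'.subset)
  have h2 : J'.encard = I.encard := hJ'.encard_eq_encard hI
  have : J'.ncard = I.ncard := by rw [Set.ncard_def, h2, ← Set.ncard_def]
  omega

lemma rk_eq_ncard_basis {N : Matroid α} {I X : Set α} (hX : X.Finite)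
    (hI : N.IsBasis I X) : rk N X = I.ncard := by
  have hbdd : BddAbove {n : ℕ | ∃ J, N.Indep J ∧ J ⊆ X ∧ J.ncard = n} := by
    refine ⟨I.ncard, ?_⟩
    rintro n ⟨J, hJ, hJX, rfl⟩
    exact ncard_le_of_basis hX hI hJ hJX
  apply le_antisymm
  · exact csSup_le ⟨0, ∅, N.empty_indep, empty_subset _, by simp⟩
      (by rintro n ⟨J, hJ, hJX, rfl⟩; exact ncard_le_of_basis hX hI hJ hJX)
  · exact le_csSup hbdd ⟨I, hI.indep, hI.subset, rfl⟩

lemma ncard_le_rk {N : Matroid α} {J X : Set α} (hX : X.Finite) (hXE : X ⊆ N.E)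
    (hJ : N.Indep J) (hJX : J ⊆ X) : J.ncard ≤ rk N X := by
  obtain ⟨I, hI⟩ := N.exists_isBasis X hXE
  rw [rk_eq_ncard_basis hX hI]
  exact ncard_le_of_basis hX hI hJ hJX

lemma span_of_flat {N : Matroid α} {K I J : Set α} (hK : N.IsFlat K) (hKfin : K.Finite)
    (hI : N.IsBasis I K) (hJ : N.Indep J) (hJK : J ⊆ K) (hcard : I.ncard ≤ J.ncard) :
    N.closure J = K := by
  obtain ⟨J', hJ', hJJ'⟩ := hJ.subset_isBasis_of_subset hJK hK.subset_ground
  have hJ'I : J'.ncard = I.ncard := by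
    rw [Set.ncard_def, hJ'.encard_eq_encard hI, ← Set.ncard_def]
  have : J = J' := Set.eq_of_subset_of_ncard_le hJJ' (by omega) (hKfin.subset hJ'.subset)
  subst this
  rw [hJ'.closure_eq_closure, hK.closure]

lemma cyclicFlat_of_forall {N : Matroid α} {K : Set α} (hK : N.IsFlat K)
    (h : ∀ z ∈ K, z ∈ N.closure (K \ {z})) : CyclicFlat N K := by
  refine ⟨hK, fun z hz hco => ?_⟩
  obtain ⟨I, hI⟩ := N.exists_isBasis (K \ {z}) ((diff_subset).trans hK.subset_ground)
  have hIK : N.IsBasis I K := by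
    refine hI.indep.isBasis_of_subset_of_subset_closure (hI.subset.trans diff_subset) ?_
    intro x hx
    rw [hI.closure_eq_closure]
    rcases eq_or_ne x z with heq | hxz
    · rw [heq]; exact h z hz
    · exact N.subset_closure _ ((diff_subset).trans hK.subset_ground) ⟨hx, hxz⟩
  have hbase : (N ↾ K).IsBase I := (isBase_restrict_iff hK.subset_ground).2 hIK
  exact (hI.subset (hco.2 I hbase)).2 rfl

/-! ### Basic cone lemmas -/

lemma subset_cone (T : α → Set α) (a : α) (S : Set α) : S ⊆ cone T a S :=
  (subset_union_left).trans subset_union_left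

lemma mem_cone_tip (T : α → Set α) (a : α) (S : Set α) : a ∈ cone T a S :=
  Or.inl (Or.inr rfl)

lemma mem_cone_T {T : α → Set α} {a : α} {S : Set α} {e t : α} (he : e ∈ S) (ht : t ∈ T e) :
    t ∈ cone T a S := Or.inr (mem_biUnion he ht)

lemma cone_mono (T : α → Set α) (a : α) {S₁ S₂ : Set α} (h : S₁ ⊆ S₂) :
    cone T a S₁ ⊆ cone T a S₂ :=
  union_subset_union (union_subset_union_left _ h) (biUnion_mono h fun _ _ => Subset.rfl)

lemma cone_empty (T : α → Set α) (a : α) : cone T a (∅ : Set α) = {a} := by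
  simp [cone]

section FreeConeLemmas

variable {M Q : Matroid α} {T : α → Set α} {a : α} {m : ℕ}

lemma FreeCone.QEfin (hFC : FreeCone M Q T a m) : Q.E.Finite := by
  rw [hFC.hQE]
  exact ((hFC.hMfin.union (hFC.hMfin.biUnion hFC.hTfin)).union (finite_singleton a))

lemma FreeCone.ME_subset (hFC : FreeCone M Q T a m) : M.E ⊆ Q.E := by
  rw [hFC.hQE]; exact (subset_union_left).trans subset_union_left

lemma FreeCone.T_subset (hFC : FreeCone M Q T a m) {e : α} (he : e ∈ M.E) : T e ⊆ Q.E := by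
  rw [hFC.hQE]
  exact ((subset_biUnion_of_mem he).trans subset_union_right).trans subset_union_left

lemma FreeCone.tip_mem (hFC : FreeCone M Q T a m) : a ∈ Q.E := by
  rw [hFC.hQE]; exact Or.inr rfl

lemma FreeCone.tip_not_mem_ME (hFC : FreeCone M Q T a m) : a ∉ M.E :=
  fun h => hFC.ha (Or.inl h)

lemma FreeCone.tip_not_mem_T (hFC : FreeCone M Q T a m) {e : α} (he : e ∈ M.E) : a ∉ T e :=
  fun h => hFC.ha (Or.inr (mem_biUnion he h))

lemma FreeCone.T_not_mem_ME (hFC : FreeCone M Q T a m) {e t : α} (he : e ∈ M.E)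
    (ht : t ∈ T e) : t ∉ M.E := fun h => (Set.disjoint_left.1 (hFC.hTdisjE e he)) ht h

lemma FreeCone.cone_subset_QE (hFC : FreeCone M Q T a m) {S : Set α} (hS : S ⊆ M.E) :
    cone T a S ⊆ Q.E := by
  rintro x (⟨hx | hx⟩ | hx)
  · exact hFC.ME_subset (hS hx)
  · rw [hx]; exact hFC.tip_mem
  · obtain ⟨e, he, hxe⟩ := mem_iUnion₂.1 hx
    exact hFC.T_subset (hS he) hxe

lemma FreeCone.rkM_pos (hFC : FreeCone M Q T a m) {F : Set α} (hF : F ⊆ M.E)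
    (hne : F.Nonempty) : 1 ≤ rk M F := by
  obtain ⟨e, he⟩ := hne
  have := ncard_le_rk (hFC.hMfin.subset hF) hF (hFC.hloopless e (hF he))
    (singleton_subset_iff.2 he)
  simpa using this

lemma FreeCone.closure_empty_Q (hFC : FreeCone M Q T a m) : Q.closure ∅ = ∅ := by
  have hflat := flat_closure Q ∅
  have hfin : (Q.closure ∅).Finite := hFC.QEfin.subset (Q.closure_subset_ground ∅)
  have hloop : ∀ x ∈ Q.closure ∅, ¬ Q.Indep {x} := by
    intro x hx hind
    rcases (Q.empty_indep.mem_closure_iff).1 hx with hdep | hmem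
    · exact hdep.not_indep (by simpa using hind)
    · exact hmem
  have hcyc : CyclicFlat Q (Q.closure ∅) := by
    refine ⟨hflat, fun z hz hco => ?_⟩
    obtain ⟨B, hB⟩ := (Q ↾ Q.closure ∅).exists_isBase
    have hzB := hco.2 B hB
    have : Q.Indep {z} :=
      ((restrict_indep_iff.1 hB.indep).1).subset (singleton_subset_iff.2 hzB)
    exact hloop z hz this
  have h0 : rk Q (Q.closure ∅) = 0 := by
    rw [rk_eq_ncard_basis hfin Q.empty_indep.isBasis_closure]; simp
  rcases (hFC.hcyclic _).1 hcyc with hMc | ⟨F', hF', hne, hEq⟩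
  · by_contra hne0
    have h1 : 1 ≤ rk M (Q.closure ∅) :=
      hFC.rkM_pos hMc.1.subset_ground (nonempty_iff_ne_empty.2 hne0)
    rw [hFC.hrank1 _ hMc] at h0; omega
  · rw [hEq, hFC.hrank2 F' hF' hne] at h0; omega

lemma FreeCone.indep_singleton_Q (hFC : FreeCone M Q T a m) {x : α} (hx : x ∈ Q.E) :
    Q.Indep {x} := by
  by_contra hind
  have hdep : Q.Dep {x} := ⟨hind, singleton_subset_iff.2 hx⟩
  have : x ∈ Q.closure ∅ := (Q.empty_indep.mem_closure_iff).2 (Or.inl (by simpa using hdep))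
  rw [hFC.closure_empty_Q] at this
  exact this

lemma FreeCone.sing_aux (hFC : FreeCone M Q T a m) {x y : α} (hx : x ∈ Q.E)
    (hy : y ∈ Q.closure {x}) (hyx : y ≠ x) : Q.closure {x} ⊆ M.E := by
  set P := Q.closure {x} with hP
  have hPflat : Q.IsFlat P := flat_closure Q {x}
  have hPfin : P.Finite := hFC.QEfin.subset (Q.closure_subset_ground {x})
  have hPE : P ⊆ Q.E := Q.closure_subset_ground {x}
  have hxP : x ∈ P := Q.mem_closure_self x hx
  have hbasis : Q.IsBasis {x} P := (hFC.indep_singleton_Q hx).isBasis_closure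
  have hspan : ∀ w ∈ P, Q.closure {w} = P := by
    intro w hw
    exact span_of_flat hPflat hPfin hbasis (hFC.indep_singleton_Q (hPE hw))
      (singleton_subset_iff.2 hw) (by simp)
  have hcyc : CyclicFlat Q P := by
    refine cyclicFlat_of_forall hPflat fun z hz => ?_
    by_cases hzx : z = x
    · have hyP : y ∈ P \ {z} := ⟨hy, by simp [hzx, hyx]⟩
      have : Q.closure {y} ⊆ Q.closure (P \ {z}) :=
        Q.closure_subset_closure (singleton_subset_iff.2 hyP)
      rw [hspan y hy] at this
      exact this hz
    · have hxP' : x ∈ P \ {z} := ⟨hxP, by simp [Ne.symm hzx]⟩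
      have : Q.closure {x} ⊆ Q.closure (P \ {z}) :=
        Q.closure_subset_closure (singleton_subset_iff.2 hxP')
      exact this hz
  rcases (hFC.hcyclic P).1 hcyc with hMc | ⟨F', hF', hne, hEq⟩
  · exact hMc.1.subset_ground
  · exfalso
    have h1 : rk Q P = 1 := by rw [rk_eq_ncard_basis hPfin hbasis]; simp
    rw [hEq, hFC.hrank2 F' hF' hne] at h1
    have := hFC.rkM_pos hF'.subset_ground hne
    omega

lemma FreeCone.closure_singleton_eq (hFC : FreeCone M Q T a m) {x : α} (hx : x ∈ Q.E)
    (hxM : x ∉ M.E) : Q.closure {x} = {x} := by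
  apply Subset.antisymm
  · intro y hy
    rcases eq_or_ne y x with rfl | hyx
    · rfl
    · exact absurd (hFC.sing_aux hx hy hyx (Q.mem_closure_self x hx)) hxM
  · exact Q.subset_closure {x} (singleton_subset_iff.2 hx)

lemma FreeCone.closure_singleton_subset (hFC : FreeCone M Q T a m) {e : α} (he : e ∈ M.E) :
    Q.closure {e} ⊆ M.E := by
  intro y hy
  rcases eq_or_ne y e with rfl | hye
  · exact he
  · exact hFC.sing_aux (hFC.ME_subset he) hy hye hy

lemma FreeCone.line_flat (hFC : FreeCone M Q T a m) {e : α} (he : e ∈ M.E) :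
    Q.IsFlat (cone T a (M.closure {e})) ∧ rk Q (cone T a (M.closure {e})) = 2 := by
  have hne : (M.closure {e}).Nonempty := ⟨e, M.mem_closure_self e he⟩
  have hcyc : CyclicFlat Q (cone T a (M.closure {e})) :=
    (hFC.hcyclic _).2 (Or.inr ⟨M.closure {e}, flat_closure M _, hne, rfl⟩)
  refine ⟨hcyc.1, ?_⟩
  rw [hFC.hrank2 _ (flat_closure M _) hne]
  have : rk M (M.closure {e}) = 1 := by
    rw [rk_eq_ncard_basis (hFC.hMfin.subset (M.closure_subset_ground _))
      (hFC.hloopless e he).isBasis_closure]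
    simp
  omega

lemma FreeCone.pair_span (hFC : FreeCone M Q T a m) {e x y : α} (he : e ∈ M.E)
    (hx : x ∈ cone T a (M.closure {e})) (hy : y ∈ cone T a (M.closure {e}))
    (hxy : x ≠ y) (hycl : y ∉ Q.closure {x}) :
    Q.closure {x, y} = cone T a (M.closure {e}) := by
  obtain ⟨hLflat, hLrk⟩ := hFC.line_flat he
  have hLE : cone T a (M.closure {e}) ⊆ Q.E := hLflat.subset_ground
  have hLfin : (cone T a (M.closure {e})).Finite := hFC.QEfin.subset hLE
  have hyE : y ∈ Q.E := hLE hy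
  have hindep : Q.Indep {x, y} := by
    rw [Set.pair_comm]
    exact ((hFC.indep_singleton_Q (hLE hx)).insert_indep_iff_of_notMem
      (by simp [Ne.symm hxy])).2 ⟨hyE, hycl⟩
  obtain ⟨I, hI⟩ := Q.exists_isBasis (cone T a (M.closure {e})) hLE
  have hIcard : I.ncard = 2 := by
    rw [rk_eq_ncard_basis hLfin hI] at hLrk; omega
  refine span_of_flat hLflat hLfin hI hindep ?_ ?_
  · exact insert_subset hx (singleton_subset_iff.2 hy)
  · rw [hIcard, Set.ncard_pair hxy]

end FreeConeLemmas
theorem closure_with_tip_is_cone {M Q : Matroid α} {T : α → Set α} {a : α} {m : ℕ}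
    (hFC : FreeCone M Q T a m) (S : Set α) (hS : S ⊆ Q.E) (haS : a ∈ Q.closure S) :
    Q.closure S = cone T a (M.closure (proj M.E T S)) ∧
      M.IsFlat (M.closure (proj M.E T S)) := by
  set K := Q.closure S with hK
  have hKflat : Q.IsFlat K := flat_closure Q S
  have hKE : K ⊆ Q.E := hKflat.subset_ground
  have haK : a ∈ K := haS
  have hcla : Q.closure {a} = {a} := hFC.closure_singleton_eq hFC.tip_mem hFC.tip_not_mem_ME
  have hMcl : M.closure ∅ = ∅ := by
    refine Subset.antisymm ?_ (empty_subset _)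
    intro x hx
    have hxE : x ∈ M.E := M.closure_subset_ground _ hx
    rcases (M.empty_indep.mem_closure_iff).1 hx with hdep | h
    · exact (hdep.not_indep (by simpa using hFC.hloopless x hxE)).elim
    · exact h.elim
  have hMflat_empty : M.IsFlat ∅ := hMcl ▸ flat_closure M ∅
  -- the span lemmas for the three kinds of pairs on the line of `e`
  have hspan_ae : ∀ e ∈ M.E, Q.closure {a, e} = cone T a (M.closure {e}) := by
    intro e he
    refine hFC.pair_span he (mem_cone_tip T a _)
      (subset_cone T a _ (M.mem_closure_self e he)) ?_ ?_
    · rintro rfl; exact hFC.tip_not_mem_ME he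
    · rw [hcla]; intro h; exact hFC.tip_not_mem_ME ((mem_singleton_iff.1 h) ▸ he)
  have hspan_at : ∀ e ∈ M.E, ∀ t ∈ T e, Q.closure {a, t} = cone T a (M.closure {e}) := by
    intro e he t ht
    refine hFC.pair_span he (mem_cone_tip T a _)
      (mem_cone_T (M.mem_closure_self e he) ht) ?_ ?_
    · rintro rfl; exact hFC.tip_not_mem_T he ht
    · rw [hcla]; intro h; exact hFC.tip_not_mem_T he ((mem_singleton_iff.1 h) ▸ ht)
  have hspan_et : ∀ e ∈ M.E, ∀ t ∈ T e, Q.closure {e, t} = cone T a (M.closure {e}) := by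
    intro e he t ht
    refine hFC.pair_span he (subset_cone T a _ (M.mem_closure_self e he))
      (mem_cone_T (M.mem_closure_self e he) ht) ?_ ?_
    · rintro rfl; exact hFC.T_not_mem_ME he ht he
    · intro h; exact hFC.T_not_mem_ME he ht (hFC.closure_singleton_subset he h)
  -- cone lines through points of K are inside K
  have hCe : ∀ e ∈ M.E, e ∈ K → cone T a (M.closure {e}) ⊆ K := by
    intro e he heK
    rw [← hspan_ae e he]
    have : Q.closure {a, e} ⊆ Q.closure K :=
      Q.closure_subset_closure (insert_subset haK (singleton_subset_iff.2 heK))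
    rwa [hKflat.closure] at this
  have hCt : ∀ e ∈ M.E, ∀ t ∈ T e, t ∈ K → cone T a (M.closure {e}) ⊆ K := by
    intro e he t ht htK
    rw [← hspan_at e he t ht]
    have : Q.closure {a, t} ⊆ Q.closure K :=
      Q.closure_subset_closure (insert_subset haK (singleton_subset_iff.2 htK))
    rwa [hKflat.closure] at this
  set F := K ∩ M.E with hF
  -- K is the cone over the flat F
  have hKcone : K = cone T a F ∧ M.IsFlat F := by
    by_cases hKa : ∃ w ∈ K, w ≠ a
    · obtain ⟨w, hwK, hwa⟩ := hKa
      have hcyc : CyclicFlat Q K := by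
        refine cyclicFlat_of_forall hKflat fun z hz => ?_
        have hzE : z ∈ Q.E := hKE hz
        rw [hFC.hQE] at hzE
        rcases hzE with (hzM | hzT) | hza
        · -- z ∈ M.E
          obtain ⟨t, ht⟩ : (T z).Nonempty := by
            apply Set.nonempty_of_ncard_ne_zero
            rw [hFC.hTcard z hzM]
            exact Nat.one_le_iff_ne_zero.1 hFC.hm
          have htK : t ∈ K := hCe z hzM hz (mem_cone_T (M.mem_closure_self z hzM) ht)
          have hsub : ({a, t} : Set α) ⊆ K \ {z} := by
            refine insert_subset ⟨haK, ?_⟩ (singleton_subset_iff.2 ⟨htK, ?_⟩)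
            · simp only [mem_singleton_iff]; rintro rfl; exact hFC.tip_not_mem_ME hzM
            · simp only [mem_singleton_iff]; rintro rfl; exact hFC.T_not_mem_ME hzM ht hzM
          have : z ∈ Q.closure {a, t} := by
            rw [hspan_at z hzM t ht]
            exact subset_cone T a _ (M.mem_closure_self z hzM)
          exact Q.closure_subset_closure hsub this
        · -- z ∈ ⋃ T
          obtain ⟨f, hf, hzf⟩ := mem_iUnion₂.1 hzT
          have hfK : f ∈ K := hCt f hf z hzf hz (subset_cone T a _ (M.mem_closure_self f hf))
          have hsub : ({a, f} : Set α) ⊆ K \ {z} := by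
            refine insert_subset ⟨haK, ?_⟩ (singleton_subset_iff.2 ⟨hfK, ?_⟩)
            · simp only [mem_singleton_iff]; rintro rfl; exact hFC.tip_not_mem_T hf hzf
            · simp only [mem_singleton_iff]; rintro rfl; exact hFC.T_not_mem_ME hf hzf hf
          have : z ∈ Q.closure {a, f} := by
            rw [hspan_ae f hf]
            exact mem_cone_T (M.mem_closure_self f hf) hzf
          exact Q.closure_subset_closure hsub this
        · -- z = a
          rw [mem_singleton_iff] at hza
          rw [hza]
          have hwE : w ∈ Q.E := hKE hwK
          rw [hFC.hQE] at hwE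
          rcases hwE with (hwM | hwT) | hwa'
          · obtain ⟨t, ht⟩ : (T w).Nonempty := by
              apply Set.nonempty_of_ncard_ne_zero
              rw [hFC.hTcard w hwM]
              exact Nat.one_le_iff_ne_zero.1 hFC.hm
            have htK : t ∈ K := hCe w hwM hwK (mem_cone_T (M.mem_closure_self w hwM) ht)
            have hsub : ({w, t} : Set α) ⊆ K \ {a} := by
              refine insert_subset ⟨hwK, ?_⟩ (singleton_subset_iff.2 ⟨htK, ?_⟩)
              · simpa using hwa
              · simp only [mem_singleton_iff]; rintro rfl; exact hFC.tip_not_mem_T hwM ht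
            have : a ∈ Q.closure {w, t} := by
              rw [hspan_et w hwM t ht]
              exact mem_cone_tip T a _
            exact Q.closure_subset_closure hsub this
          · obtain ⟨f, hf, hwf⟩ := mem_iUnion₂.1 hwT
            have hfK : f ∈ K := hCt f hf w hwf hwK (subset_cone T a _ (M.mem_closure_self f hf))
            have hsub : ({f, w} : Set α) ⊆ K \ {a} := by
              refine insert_subset ⟨hfK, ?_⟩ (singleton_subset_iff.2 ⟨hwK, ?_⟩)
              · simp only [mem_singleton_iff]; rintro rfl; exact hFC.tip_not_mem_ME hf
              · simpa using hwa
            have : a ∈ Q.closure {f, w} := by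
              rw [hspan_et f hf w hwf]
              exact mem_cone_tip T a _
            exact Q.closure_subset_closure hsub this
          · exact (hwa (mem_singleton_iff.1 hwa')).elim
      rcases (hFC.hcyclic K).1 hcyc with hMc | ⟨F'', hF'', hne'', hEq⟩
      · exact (hFC.tip_not_mem_ME (hMc.1.subset_ground haK)).elim
      · have hFF : F = F'' := by
          rw [hF, hEq]
          ext x
          constructor
          · rintro ⟨(hx | hx) | hx, hxM⟩
            · exact hx
            · exact (hFC.tip_not_mem_ME ((mem_singleton_iff.1 hx) ▸ hxM)).elim
            · obtain ⟨f, hf, hxf⟩ := mem_iUnion₂.1 hx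
              exact (hFC.T_not_mem_ME (hF''.subset_ground hf) hxf hxM).elim
          · intro hx
            exact ⟨Or.inl (Or.inl hx), hF''.subset_ground hx⟩
        exact ⟨by rw [hEq, hFF], by rw [hFF]; exact hF''⟩
    · push_neg at hKa
      have hKeq : K = {a} := Subset.antisymm (fun w hw => hKa w hw) (singleton_subset_iff.2 haK)
      have hFe : F = ∅ := by
        ext x
        simp only [hF, mem_inter_iff, mem_empty_iff_false, iff_false, not_and]
        intro hxK hxM
        rw [hKeq, mem_singleton_iff] at hxK
        exact hFC.tip_not_mem_ME (hxK ▸ hxM)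
      refine ⟨by rw [hFe, cone_empty, hKeq], by rw [hFe]; exact hMflat_empty⟩
  -- the projection lands in F
  have hproj_sub : proj M.E T S ⊆ M.E := by
    rintro u (⟨-, huM⟩ | ⟨huM, -⟩) <;> exact huM
  have hpSF : proj M.E T S ⊆ F := by
    rintro u (⟨huS, huM⟩ | ⟨huM, t, htS, htT⟩)
    · exact ⟨Q.subset_closure S hS huS, huM⟩
    · have htK : t ∈ K := Q.subset_closure S hS htS
      exact ⟨hCt u huM t htT htK (subset_cone T a _ (M.mem_closure_self u huM)), huM⟩
  set G := M.closure (proj M.E T S) with hG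
  have hGF : G ⊆ F := by
    have h := M.closure_subset_closure hpSF
    rwa [hKcone.2.closure] at h
  have h1 : cone T a G ⊆ K := by
    rw [hKcone.1]; exact cone_mono T a hGF
  have h2 : K ⊆ cone T a G := by
    have hconeflat : Q.IsFlat (cone T a G) := by
      rcases G.eq_empty_or_nonempty with hGe | hGne
      · rw [hGe, cone_empty, ← hcla]
        exact flat_closure Q {a}
      · exact ((hFC.hcyclic _).2 (Or.inr ⟨G, flat_closure M _, hGne, rfl⟩)).1
    have hScone : S ⊆ cone T a G := by
      intro s hsS
      have hsE := hS hsS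
      rw [hFC.hQE] at hsE
      rcases hsE with (hsM | hsT) | hsa
      · exact subset_cone T a G (M.subset_closure _ hproj_sub (Or.inl ⟨hsS, hsM⟩))
      · obtain ⟨f, hf, hsf⟩ := mem_iUnion₂.1 hsT
        have hfG : f ∈ G := M.subset_closure _ hproj_sub (Or.inr ⟨hf, ⟨s, hsS, hsf⟩⟩)
        exact mem_cone_T hfG hsf
      · rw [mem_singleton_iff] at hsa
        rw [hsa]
        exact mem_cone_tip T a G
    have h := Q.closure_subset_closure hScone
    rwa [hconeflat.closure] at h
  exact ⟨Subset.antisymm h2 h1, flat_closure M _⟩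
end ConePaper
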